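/- arXiv:math/9412226 — 2 statements merged into one kernel-verified Lean document; each statement's English description precedes it below -/
import Mathlib

section
/- For all x with |x| ≤ 1 (or at least |x| < 1), (arcsin x)² = ∑_{n=0}^∞ 4^n·(n!)²/((n+1)·(2n+1)!) · x^{2n+2}. -/
open Filter Finset Real Set



noncomputable def myB (n : ℕ) : ℝ :=
  2 * 4 ^ n * (Nat.factorial n : ℝ) ^ 2 / (Nat.factorial (2 * n + 1) : ℝ)

lemma fact_pos' (n : ℕ) : (0:ℝ) < (Nat.factorial n : ℝ) := by
  exact_mod_cast Nat.factorial_pos n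

lemma fact_le (n : ℕ) : (4:ℝ) ^ n * (Nat.factorial n : ℝ) ^ 2 ≤ (Nat.factorial (2 * n + 1) : ℝ) := by
  induction n with
  | zero => norm_num
  | succ n ih =>
    have h1 : 2 * (n + 1) + 1 = (2 * n + 1) + 1 + 1 := by ring
    rw [h1, Nat.factorial_succ, Nat.factorial_succ]
    push_cast
    have h2 : (0:ℝ) < (Nat.factorial (2 * n + 1) : ℝ) := fact_pos' _
    have h3 : (0:ℝ) ≤ (4:ℝ)^n * (Nat.factorial n : ℝ)^2 := by positivity
    rw [Nat.factorial_succ]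
    push_cast
    calc (4:ℝ)^(n+1) * (((n:ℝ)+1) * (Nat.factorial n : ℝ))^2
        = 4*((n:ℝ)+1)^2 * ((4:ℝ)^n * (Nat.factorial n : ℝ)^2) := by ring
      _ ≤ 4*((n:ℝ)+1)^2 * (Nat.factorial (2*n+1) : ℝ) := by
          have : (0:ℝ) ≤ 4*((n:ℝ)+1)^2 := by positivity
          exact mul_le_mul_of_nonneg_left ih this
      _ ≤ (2*(n:ℝ)+2+1) * ((2*(n:ℝ)+1+1) * (Nat.factorial (2*n+1) : ℝ)) := by nlinarith [h2]

lemma myB_nonneg (n : ℕ) : 0 ≤ myB n := by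
  unfold myB; positivity

lemma myB_le (n : ℕ) : myB n ≤ 2 := by
  unfold myB
  rw [div_le_iff₀ (fact_pos' _)]
  nlinarith [fact_le n]

lemma myB_zero : myB 0 = 2 := by norm_num [myB]

lemma myB_rec (n : ℕ) : (2*(n:ℝ)+3) * myB (n+1) = (2*(n:ℝ)+2) * myB n := by
  unfold myB
  have h1 : 2 * (n + 1) + 1 = (2 * n + 1) + 1 + 1 := by ring
  rw [h1, Nat.factorial_succ, Nat.factorial_succ, Nat.factorial_succ]
  have h2 : ((Nat.factorial (2*n+1)) : ℝ) ≠ 0 := (fact_pos' _).ne'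
  push_cast
  field_simp
  ring


lemma summable_of_poly_bound (f : ℕ → ℝ) (C : ℝ) {r : ℝ} (hr0 : 0 ≤ r) (hr : r < 1)
    (h : ∀ n, ‖f n‖ ≤ C * (((n:ℝ)+1) * r^n)) : Summable f := by
  have hnr : ‖r‖ < 1 := by rwa [Real.norm_eq_abs, abs_of_nonneg hr0]
  have h1 : Summable (fun n : ℕ => ((n:ℝ)+1) * r^n) := by
    have ha := summable_pow_mul_geometric_of_norm_lt_one 1 hnr (R := ℝ)
    have hb := summable_geometric_of_lt_one hr0 hr
    simpa [add_mul, pow_one] using ha.add hb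
  exact Summable.of_norm_bounded (h1.mul_left C) h

lemma hasDerivAt_tsum_unit (f f' : ℕ → ℝ → ℝ)
    (hf : ∀ n y, HasDerivAt (f n) (f' n y) y)
    (hbound : ∀ r : ℝ, 0 ≤ r → r < 1 →
      ∃ u : ℕ → ℝ, Summable u ∧ ∀ n y, |y| ≤ r → ‖f' n y‖ ≤ u n)
    (hsum : ∀ y : ℝ, |y| < 1 → Summable fun n => f n y)
    {x : ℝ} (hx : |x| < 1) :
    HasDerivAt (fun y => ∑' n, f n y) (∑' n, f' n x) x := by
  have hball : x ∈ Metric.ball (0:ℝ) 1 := by simpa [Real.dist_eq] using hx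
  refine hasDerivAt_of_tendstoLocallyUniformlyOn (l := atTop) (f := fun N y => ∑ n ∈ Finset.range N, f n y)
    (f' := fun N y => ∑ n ∈ Finset.range N, f' n y) (g' := fun y => ∑' n, f' n y)
    Metric.isOpen_ball ?_ ?_ ?_ hball
  · rw [tendstoLocallyUniformlyOn_iff_forall_isCompact Metric.isOpen_ball]
    intro k hk hkc
    rcases k.eq_empty_or_nonempty with rfl | hne
    · simp [TendstoUniformlyOn]
    · obtain ⟨x₀, hx₀k, hx₀⟩ := hkc.exists_isMaxOn hne (continuous_abs.continuousOn)
      have hr0 : 0 ≤ |x₀| := abs_nonneg _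
      have hr1 : |x₀| < 1 := by simpa [Real.dist_eq] using hk hx₀k
      obtain ⟨u, hu, hub⟩ := hbound |x₀| hr0 hr1
      exact tendstoUniformlyOn_tsum_nat hu fun n y hy => hub n y (hx₀ hy)
  · filter_upwards with N y hy using HasDerivAt.fun_sum fun n _ => hf n y
  · intro y hy
    exact ((hsum y (by simpa [Real.dist_eq] using hy)).hasSum).tendsto_sum_nat

lemma summable_aux (c : ℕ → ℝ) (C : ℝ) (hc : ∀ n, |c n| ≤ C * ((n:ℝ)+1))
    (e : ℕ → ℕ) (he : ∀ n, n ≤ e n) {y : ℝ} (hy : |y| < 1)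
    (f : ℕ → ℝ) (hf : ∀ n, f n = c n * y ^ (e n)) :
    Summable f := by
  apply summable_of_poly_bound _ C (abs_nonneg y) hy
  intro n
  rw [hf n]
  have h1 : |y| ^ (e n) ≤ |y| ^ n := pow_le_pow_of_le_one (abs_nonneg y) hy.le (he n)
  have h2 : (0:ℝ) ≤ |y|^n := by positivity
  have h3 : |c n| ≤ C * ((n:ℝ)+1) := hc n
  have h0 : (0:ℝ) ≤ |c n| := abs_nonneg _
  calc ‖c n * y ^ (e n)‖ = |c n| * |y| ^ (e n) := by
        rw [Real.norm_eq_abs, abs_mul, abs_pow]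
    _ ≤ (C * ((n:ℝ)+1)) * |y| ^ n := by
        apply mul_le_mul h3 h1 (by positivity) (le_trans h0 h3)
    _ = C * (((n:ℝ)+1) * |y| ^ n) := by ring

lemma sum_exp1 {y : ℝ} (hy : |y| < 1) :
    Summable (fun n => myB n * ((2*(n:ℝ)+1) * y^(2*n))) := by
  refine summable_aux (fun n => myB n * (2*(n:ℝ)+1)) 4 (fun n => ?_) (fun n => 2*n) (fun n => by beta_reduce; omega) hy _ (fun n => by ring)
  beta_reduce
  have := myB_le n; have := myB_nonneg n
  rw [abs_of_nonneg (by positivity)]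
  nlinarith [Nat.cast_nonneg (α := ℝ) n]

lemma sum_exp2 {y : ℝ} (hy : |y| < 1) :
    Summable (fun n => myB n * y^(2*n+1)) := by
  refine summable_aux (fun n => myB n) 2 (fun n => ?_) (fun n => 2*n+1) (fun n => by beta_reduce; omega) hy _ (fun n => by ring)
  beta_reduce
  have := myB_le n; have := myB_nonneg n
  rw [abs_of_nonneg (by positivity)]
  nlinarith [Nat.cast_nonneg (α := ℝ) n]

lemma sum_exp3 {y : ℝ} (hy : |y| < 1) :
    Summable (fun n => myB n * ((2*(n:ℝ)+2) * y^(2*n+2))) := by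
  refine summable_aux (fun n => myB n * (2*(n:ℝ)+2)) 4 (fun n => ?_) (fun n => 2*n+2) (fun n => by beta_reduce; omega) hy _ (fun n => by ring)
  beta_reduce
  have := myB_le n; have := myB_nonneg n
  rw [abs_of_nonneg (by positivity)]
  nlinarith [Nat.cast_nonneg (α := ℝ) n]

lemma ode (y : ℝ) (hy : |y| < 1) :
    (1 - y^2) * (∑' n, myB n * ((2*(n:ℝ)+1) * y^(2*n)))
      - y * (∑' n, myB n * y^(2*n+1)) = 2 := by
  have hA := sum_exp1 hy
  have hB := sum_exp2 hy
  have hC := sum_exp3 hy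
  rw [← tsum_mul_left, ← tsum_mul_left,
    ← Summable.tsum_sub (hA.mul_left _) (hB.mul_left _)]
  have step1 : ∀ n : ℕ, (1 - y^2) * (myB n * ((2*(n:ℝ)+1) * y^(2*n)))
      - y * (myB n * y^(2*n+1))
      = myB n * ((2*(n:ℝ)+1) * y^(2*n)) - myB n * ((2*(n:ℝ)+2) * y^(2*n+2)) := by
    intro n; ring
  rw [tsum_congr step1, Summable.tsum_sub hA hC, Summable.tsum_eq_zero_add hA]
  have step2 : ∀ n : ℕ, myB (n+1) * ((2*((n:ℝ)+1)+1) * y^(2*(n+1)))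
      = myB n * ((2*(n:ℝ)+2) * y^(2*n+2)) := by
    intro n
    have h := myB_rec n
    have he : 2*(n+1) = 2*n+2 := by omega
    rw [he]
    linear_combination y^(2*n+2) * h
  have step2' : ∑' n : ℕ, myB (n+1) * ((2*(((n:ℕ):ℝ)+1)+1) * y^(2*(n+1)))
      = ∑' n : ℕ, myB n * ((2*(n:ℝ)+2) * y^(2*n+2)) := tsum_congr step2
  push_cast
  push_cast at step2'
  rw [step2']
  simp [myB_zero]

noncomputable def myV (y : ℝ) : ℝ := ∑' n, myB n * y^(2*n+1)

noncomputable def myA (n : ℕ) : ℝ :=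
  4 ^ n * (Nat.factorial n : ℝ) ^ 2 / (((n:ℝ) + 1) * (Nat.factorial (2 * n + 1) : ℝ))

lemma summable_poly {r : ℝ} (hr0 : 0 ≤ r) (hr : r < 1) :
    Summable (fun n : ℕ => ((n:ℝ)+1) * r^n) := by
  have hnr : ‖r‖ < 1 := by rwa [Real.norm_eq_abs, abs_of_nonneg hr0]
  have ha := summable_pow_mul_geometric_of_norm_lt_one 1 hnr (R := ℝ)
  have hb := summable_geometric_of_lt_one hr0 hr
  simpa [add_mul, pow_one] using ha.add hb

lemma myAB (n : ℕ) : (2*(n:ℝ)+2) * myA n = myB n := by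
  unfold myA myB
  have h1 : ((n:ℝ)+1) ≠ 0 := by positivity
  have h2 : ((Nat.factorial (2*n+1)) : ℝ) ≠ 0 := (fact_pos' _).ne'
  field_simp

lemma myA_nonneg (n : ℕ) : 0 ≤ myA n := by unfold myA; positivity

lemma myA_le (n : ℕ) : myA n ≤ 1 := by
  have h := myB_le n
  have h2 := myAB n
  nlinarith [myA_nonneg n, Nat.cast_nonneg (α := ℝ) n]

lemma myV_hasDeriv {x : ℝ} (hx : |x| < 1) :
    HasDerivAt myV (∑' n, myB n * ((2*(n:ℝ)+1) * x^(2*n))) x := by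
  apply hasDerivAt_tsum_unit (f := fun n y => myB n * y^(2*n+1))
    (f' := fun n y => myB n * ((2*(n:ℝ)+1) * y^(2*n)))
  · intro n y
    have h := (hasDerivAt_pow (2*n+1) y).const_mul (myB n)
    have he : 2*n+1-1 = 2*n := by omega
    rw [he] at h
    refine h.congr_deriv ?_
    push_cast
    ring
  · intro r hr0 hr1
    refine ⟨fun n => 4*(((n:ℝ)+1)*r^n), (summable_poly hr0 hr1).mul_left 4, ?_⟩
    intro n y hy
    have h1 : |y|^(2*n) ≤ r^n :=
      le_trans (pow_le_pow_left₀ (abs_nonneg y) hy _)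
        (pow_le_pow_of_le_one hr0 hr1.le (by omega))
    have hrn : (0:ℝ) ≤ r^n := by positivity
    have hb := myB_le n
    have hb0 := myB_nonneg n
    rw [Real.norm_eq_abs, abs_mul, abs_mul, abs_pow,
      abs_of_nonneg hb0, abs_of_nonneg (by positivity : (0:ℝ) ≤ 2*(n:ℝ)+1)]
    beta_reduce
    have hpy : (0:ℝ) ≤ |y|^(2*n) := by positivity
    calc myB n * ((2*(n:ℝ)+1) * |y|^(2*n))
        ≤ 2 * ((2*(n:ℝ)+1) * |y|^(2*n)) :=
          mul_le_mul_of_nonneg_right hb (by positivity)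
      _ ≤ 2 * ((2*(n:ℝ)+1) * r^n) := by
          nlinarith [mul_le_mul_of_nonneg_left h1
            (by positivity : (0:ℝ) ≤ 2*(2*(n:ℝ)+1))]
      _ ≤ 4*(((n:ℝ)+1)*r^n) := by linarith
  · intro y hy
    exact sum_exp2 hy
  · exact hx

noncomputable def myS (y : ℝ) : ℝ := ∑' n, myA n * y^(2*n+2)

lemma myS_hasDeriv {x : ℝ} (hx : |x| < 1) :
    HasDerivAt myS (myV x) x := by
  have h := hasDerivAt_tsum_unit (f := fun n y => myA n * y^(2*n+2))
    (f' := fun n y => myA n * ((2*(n:ℝ)+2) * y^(2*n+1))) ?_ ?_ ?_ hx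
  · have he : (∑' n, myA n * ((2*(n:ℝ)+2) * x^(2*n+1))) = myV x := by
      unfold myV
      refine tsum_congr fun n => ?_
      have := myAB n
      linear_combination x^(2*n+1) * this
    rw [he] at h
    exact h
  · intro n y
    have h := (hasDerivAt_pow (2*n+2) y).const_mul (myA n)
    have he : 2*n+2-1 = 2*n+1 := by omega
    rw [he] at h
    refine h.congr_deriv ?_
    push_cast
    ring
  · intro r hr0 hr1
    refine ⟨fun n => 4*(((n:ℝ)+1)*r^n), (summable_poly hr0 hr1).mul_left 4, ?_⟩
    intro n y hy
    have h1 : |y|^(2*n+1) ≤ r^n :=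
      le_trans (pow_le_pow_left₀ (abs_nonneg y) hy _)
        (pow_le_pow_of_le_one hr0 hr1.le (by omega))
    have hrn : (0:ℝ) ≤ r^n := by positivity
    have hb := myA_le n
    have hb0 := myA_nonneg n
    rw [Real.norm_eq_abs, abs_mul, abs_mul, abs_pow,
      abs_of_nonneg hb0, abs_of_nonneg (by positivity : (0:ℝ) ≤ 2*(n:ℝ)+2)]
    beta_reduce
    have hpy : (0:ℝ) ≤ |y|^(2*n+1) := by positivity
    calc myA n * ((2*(n:ℝ)+2) * |y|^(2*n+1))
        ≤ 1 * ((2*(n:ℝ)+2) * |y|^(2*n+1)) :=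
          mul_le_mul_of_nonneg_right hb (by positivity)
      _ ≤ 1 * ((2*(n:ℝ)+2) * r^n) := by
          nlinarith [mul_le_mul_of_nonneg_left h1
            (by positivity : (0:ℝ) ≤ 1*(2*(n:ℝ)+2))]
      _ ≤ 4*(((n:ℝ)+1)*r^n) := by
          nlinarith [mul_nonneg (Nat.cast_nonneg (α := ℝ) n) hrn]
  · intro y hy
    refine summable_aux (fun n => myA n) 1 (fun n => ?_) (fun n => 2*n+2)
      (fun n => by beta_reduce; omega) hy _ (fun n => by ring)
    beta_reduce
    rw [abs_of_nonneg (myA_nonneg n)]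
    nlinarith [myA_le n, Nat.cast_nonneg (α := ℝ) n]

lemma const_of_deriv0 (g : ℝ → ℝ) (hg : ∀ y : ℝ, |y| < 1 → HasDerivAt g 0 y)
    {x : ℝ} (hx : |x| < 1) : g x = g 0 := by
  obtain ⟨hx1, hx2⟩ := abs_lt.mp hx
  rcases le_or_gt 0 x with h | h
  · have key := constant_of_has_deriv_right_zero (f := g) (a := 0) (b := x)
      (fun y hy => (hg y (by rw [abs_lt]; constructor <;>
        [linarith [hy.1]; linarith [hy.2]])).continuousAt.continuousWithinAt)
      (fun y hy => (hg y (by rw [abs_lt]; constructor <;>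
        [linarith [hy.1]; linarith [hy.2]])).hasDerivWithinAt)
    exact key x ⟨h, le_refl x⟩
  · have key := constant_of_has_deriv_right_zero (f := g) (a := x) (b := 0)
      (fun y hy => (hg y (by rw [abs_lt]; constructor <;>
        [linarith [hy.1]; linarith [hy.2]])).continuousAt.continuousWithinAt)
      (fun y hy => (hg y (by rw [abs_lt]; constructor <;>
        [linarith [hy.1]; linarith [hy.2]])).hasDerivWithinAt)
    exact (key 0 ⟨h.le, le_refl 0⟩).symm

lemma one_sub_sq_pos {y : ℝ} (hy : |y| < 1) : 0 < 1 - y^2 := by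
  obtain ⟨h1, h2⟩ := abs_lt.mp hy
  nlinarith

lemma sqrt_hasDeriv {y : ℝ} (hy : |y| < 1) :
    HasDerivAt (fun z : ℝ => √(1 - z^2)) (-y / √(1 - y^2)) y := by
  have hpos := one_sub_sq_pos hy
  have h0 : HasDerivAt (fun z : ℝ => 1 - z^2) (-(2*y)) y := by
    simpa using ((hasDerivAt_pow 2 y).const_sub 1)
  have h1 := (Real.hasDerivAt_sqrt hpos.ne').comp y h0
  refine h1.congr_deriv ?_
  symm
  have hs : √(1 - y^2) ≠ 0 := (Real.sqrt_pos.mpr hpos).ne'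
  field_simp

lemma sqrtV_eq (x : ℝ) (hx : |x| < 1) :
    √(1 - x^2) * myV x - 2 * Real.arcsin x = 0 := by
  have key : ∀ y : ℝ, |y| < 1 →
      HasDerivAt (fun z => √(1 - z^2) * myV z - 2 * Real.arcsin z) 0 y := by
    intro y hy
    obtain ⟨hy1, hy2⟩ := abs_lt.mp hy
    have hpos := one_sub_sq_pos hy
    have hs0 : √(1 - y^2) ≠ 0 := (Real.sqrt_pos.mpr hpos).ne'
    have hss : √(1 - y^2) * √(1 - y^2) = 1 - y^2 := Real.mul_self_sqrt hpos.le
    have h1 := (sqrt_hasDeriv hy).mul (myV_hasDeriv hy)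
    have h2 := (Real.hasDerivAt_arcsin hy1.ne' hy2.ne).const_mul (2:ℝ)
    have h3 := h1.sub h2
    refine h3.congr_deriv ?_
    symm
    have hode := ode y hy
    have hV : myV y = ∑' n, myB n * y^(2*n+1) := rfl
    rw [← hV] at hode
    field_simp
    linear_combination -hode - (∑' (n : ℕ), myB n * ((2 * (n:ℝ) + 1) * y ^ (2 * n))) * hss + √(1 - y^2) ^ 2 * (tsum_congr fun n => by ring : (∑' (n : ℕ), myB n * ((2 * (n:ℝ) + 1) * y ^ (2 * n))) = ∑' (n : ℕ), myB n * (2 * (n:ℝ) + 1) * y ^ (2 * n))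
  have := const_of_deriv0 _ key hx
  rw [this]
  have hV0 : myV 0 = 0 := by
    unfold myV
    have : ∀ n : ℕ, myB n * (0:ℝ)^(2*n+1) = 0 := fun n => by
      rw [zero_pow (by omega)]; ring
    rw [tsum_congr this, tsum_zero]
  simp [hV0]

theorem stmt_7 (x : ℝ) (hx : |x| < 1) :
    (Real.arcsin x) ^ 2 = ∑' n : ℕ,
      4 ^ n * (Nat.factorial n : ℝ) ^ 2 /
        ((n + 1) * (Nat.factorial (2 * n + 1) : ℝ)) * x ^ (2 * n + 2) := by
  have key : ∀ y : ℝ, |y| < 1 →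
      HasDerivAt (fun z => myS z - Real.arcsin z ^ 2) 0 y := by
    intro y hy
    obtain ⟨hy1, hy2⟩ := abs_lt.mp hy
    have hpos := one_sub_sq_pos hy
    have hs0 : √(1 - y^2) ≠ 0 := (Real.sqrt_pos.mpr hpos).ne'
    have h1 := myS_hasDeriv hy
    have h2 := (Real.hasDerivAt_arcsin hy1.ne' hy2.ne).pow 2
    have h3 := h1.sub h2
    refine h3.congr_deriv ?_
    symm
    have h4 := sqrtV_eq y hy
    field_simp
    linear_combination -h4
  have h5 := const_of_deriv0 _ key hx
  have hS0 : myS 0 = 0 := by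
    unfold myS
    rw [tsum_congr (fun n => by
      rw [zero_pow (by omega : 2*n+2 ≠ 0)]; ring : ∀ n : ℕ, myA n * (0:ℝ)^(2*n+2) = 0),
      tsum_zero]
  rw [hS0, Real.arcsin_zero] at h5
  have heq : (∑' n : ℕ, 4 ^ n * (Nat.factorial n : ℝ) ^ 2 /
      ((n + 1) * (Nat.factorial (2 * n + 1) : ℝ)) * x ^ (2 * n + 2)) = myS x := rfl
  rw [heq]
  simp only [ne_eq, OfNat.ofNat_ne_zero, not_false_eq_true, zero_pow, sub_zero] at h5
  linarith [h5]
end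

section
/- Both sums u(n) = ∑_{k=0}^n C(n,k)³ and v(n) = ∑_{k=0}^n C(n,k)²·C(2k,n) satisfy the same recurrence (n+2)²·s(n+2) − (7n² + 21n + 16)·s(n+1) − 8(n+1)²·s(n) = 0, and hence, since u(0)=v(0)=1 and u(1)=v(1)=2, u(n) = v(n) for all n (Strehl's identity). -/
open Finset

/-! ### Part 1: the Franel recurrence via a Zeilberger certificate -/

/-- Certificate polynomial. -/
def Yc (n k : ℚ) : ℚ :=
  (4 + 8*n + 4*n^2) * k^3 + (-30 - 78*n - 66*n^2 - 18*n^3) * k^2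
    + (78 + 249*n + 291*n^2 + 147*n^3 + 27*n^4) * k
    + (-72 - 272*n - 402*n^2 - 290*n^3 - 102*n^4 - 14*n^5)

/-- Telescoping witness. -/
def Gq (n k : ℕ) : ℚ :=
  (k : ℚ)^3 * Yc (n : ℚ) (k : ℚ) * ((n+2).choose k : ℚ)^3
    / (((n : ℚ) + 1)^3 * ((n : ℚ) + 2)^3)

lemma ratio_row (m k : ℕ) :
    ((m : ℚ) + 1 - k) * ((m+1).choose k : ℚ) = ((m : ℚ) + 1) * (m.choose k : ℚ) := by
  rcases le_or_gt k (m+1) with h | h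
  · have h1 := Nat.add_one_mul_choose_eq m k
    have h2 := Nat.choose_succ_right_eq (m+1) k
    have h3 : (m+1) * m.choose k = (m+1).choose k * (m + 1 - k) := by
      simpa [Nat.succ_eq_add_one] using h1.trans h2
    have h4 : ((m + 1 - k : ℕ) : ℚ) = (m : ℚ) + 1 - k := by
      push_cast [h]; ring
    calc ((m : ℚ) + 1 - k) * ((m+1).choose k : ℚ)
        = (((m+1).choose k * (m + 1 - k) : ℕ) : ℚ) := by push_cast [h4]; ring
      _ = (((m+1) * m.choose k : ℕ) : ℚ) := by rw [← h3]
      _ = ((m : ℚ) + 1) * (m.choose k : ℚ) := by push_cast; ring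
  · rw [Nat.choose_eq_zero_of_lt h, Nat.choose_eq_zero_of_lt (by omega)]
    simp

lemma ratio_col (m k : ℕ) :
    ((k : ℚ) + 1) * (m.choose (k+1) : ℚ) = ((m : ℚ) - k) * (m.choose k : ℚ) := by
  rcases le_or_gt k m with h | h
  · have h1 := Nat.choose_succ_right_eq m k
    have h4 : ((m - k : ℕ) : ℚ) = (m : ℚ) - k := by push_cast [h]; ring
    calc ((k : ℚ) + 1) * (m.choose (k+1) : ℚ)
        = ((m.choose (k+1) * (k+1) : ℕ) : ℚ) := by push_cast; ring
      _ = ((m.choose k * (m - k) : ℕ) : ℚ) := by rw [h1]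
      _ = ((m : ℚ) - k) * (m.choose k : ℚ) := by push_cast [h4]; ring
  · rw [Nat.choose_eq_zero_of_lt h, Nat.choose_eq_zero_of_lt (by omega)]
    simp

lemma perk (n k : ℕ) :
    ((n : ℚ) + 2)^2 * ((n+2).choose k : ℚ)^3
      - (7*(n : ℚ)^2 + 21*n + 16) * ((n+1).choose k : ℚ)^3
      - 8*((n : ℚ) + 1)^2 * (n.choose k : ℚ)^3
    = Gq n (k+1) - Gq n k := by
  have hn1 : ((n : ℚ) + 1) ≠ 0 := by positivity
  have hn2 : ((n : ℚ) + 2) ≠ 0 := by positivity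
  have hk1 : ((k : ℚ) + 1) ≠ 0 := by positivity
  have h1 : ((n : ℚ) + 2 - k) * ((n+2).choose k : ℚ)
      = ((n : ℚ) + 2) * ((n+1).choose k : ℚ) := by
    have h := ratio_row (n+1) k
    rw [show n+1+1 = n+2 by ring] at h
    push_cast at h
    linear_combination h
  have h2 := ratio_row n k
  have h3 := ratio_col (n+2) k
  push_cast at h2 h3
  have h1c : (((n : ℚ) + 2 - k) * ((n+2).choose k : ℚ))^3
      = (((n : ℚ) + 2) * ((n+1).choose k : ℚ))^3 := by rw [h1]
  have h2c : (((n : ℚ) + 1 - k) * ((n+1).choose k : ℚ))^3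
      = (((n : ℚ) + 1) * (n.choose k : ℚ))^3 := by rw [h2]
  have h3c : (((k : ℚ) + 1) * ((n+2).choose (k+1) : ℚ))^3
      = (((n : ℚ) + 2 - k) * ((n+2).choose k : ℚ))^3 := by rw [h3]
  rw [mul_pow, mul_pow] at h1c h2c h3c
  have e0 : (n.choose k : ℚ)^3
      = ((n : ℚ) + 1 - k)^3 * ((n+1).choose k : ℚ)^3 / ((n : ℚ) + 1)^3 := by
    field_simp
    linear_combination - h2c
  have e1 : ((n+1).choose k : ℚ)^3
      = ((n : ℚ) + 2 - k)^3 * ((n+2).choose k : ℚ)^3 / ((n : ℚ) + 2)^3 := by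
    field_simp
    linear_combination - h1c
  have ez : ((n+2).choose (k+1) : ℚ)^3
      = ((n : ℚ) + 2 - k)^3 * ((n+2).choose k : ℚ)^3 / ((k : ℚ) + 1)^3 := by
    field_simp
    linear_combination h3c
  simp only [Gq, Yc]
  rw [e0, e1, ez]
  push_cast
  field_simp
  ring

lemma sumQ (n : ℕ) :
    ∑ k ∈ range (n+3),
      (((n : ℚ) + 2)^2 * ((n+2).choose k : ℚ)^3
        - (7*(n : ℚ)^2 + 21*n + 16) * ((n+1).choose k : ℚ)^3
        - 8*((n : ℚ) + 1)^2 * (n.choose k : ℚ)^3) = 0 := by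
  have h : ∀ k ∈ range (n+3),
      (((n : ℚ) + 2)^2 * ((n+2).choose k : ℚ)^3
        - (7*(n : ℚ)^2 + 21*n + 16) * ((n+1).choose k : ℚ)^3
        - 8*((n : ℚ) + 1)^2 * (n.choose k : ℚ)^3) = Gq n (k+1) - Gq n k :=
    fun k _ => perk n k
  rw [Finset.sum_congr rfl h, Finset.sum_range_sub (Gq n) (n+3)]
  have hz : (n+2).choose (n+3) = 0 := Nat.choose_eq_zero_of_lt (by omega)
  simp [Gq, hz]

lemma franelZ (n : ℕ) :
    ((n : ℤ) + 2)^2 * ∑ k ∈ range (n+3), ((n+2).choose k : ℤ)^3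
      - (7*(n : ℤ)^2 + 21*n + 16) * ∑ k ∈ range (n+2), ((n+1).choose k : ℤ)^3
      - 8*((n : ℤ) + 1)^2 * ∑ k ∈ range (n+1), (n.choose k : ℤ)^3 = 0 := by
  have key := sumQ n
  simp only [Finset.sum_sub_distrib, ← Finset.mul_sum] at key
  have e1 : ∑ k ∈ range (n+3), ((n+1).choose k : ℚ)^3
      = ∑ k ∈ range (n+2), ((n+1).choose k : ℚ)^3 := by
    rw [Finset.sum_range_succ, Nat.choose_eq_zero_of_lt (by omega)]
    simp
  have e2 : ∑ k ∈ range (n+3), (n.choose k : ℚ)^3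
      = ∑ k ∈ range (n+1), (n.choose k : ℚ)^3 := by
    rw [Finset.sum_range_succ, Finset.sum_range_succ,
      Nat.choose_eq_zero_of_lt (by omega), Nat.choose_eq_zero_of_lt (by omega)]
    simp
  rw [e1, e2] at key
  exact_mod_cast key

/-! ### Part 2: Strehl's identity -/

lemma trinom1 (i j m : ℕ) :
    (i+j).choose (i+m) * (i+m).choose i = (i+j).choose i * j.choose m := by
  rcases le_or_gt m j with hm | hm
  · have h := Nat.choose_mul (n := i+j) (show i ≤ i+m by omega)
    simpa using h
  · rw [Nat.choose_eq_zero_of_lt (show i+j < i+m by omega),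
      Nat.choose_eq_zero_of_lt hm]
    simp

lemma trinom2 (i j m : ℕ) (hm : m ≤ j) :
    (i+j).choose (i+m) * (i+m).choose j = (i+j).choose j * i.choose (j-m) := by
  rcases lt_or_ge (i+m) j with h | h
  · rw [Nat.choose_eq_zero_of_lt h, Nat.choose_eq_zero_of_lt (show i < j - m by omega)]
    simp
  · have h2 := Nat.choose_mul (n := i+j) h
    have h3 : (i+j-j) = i := by omega
    have h4 : i.choose (i+m-j) = i.choose (j-m) := by
      rw [← Nat.choose_symm (show i+m-j ≤ i by omega)]
      congr 1
      omega
    rw [h2, h3, h4]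

lemma innerSum3 (i j : ℕ) :
    ∑ k ∈ range (i+j+1), ((i+j).choose k)^2 * (k.choose i * k.choose j)
      = (i+j).choose i * ((i+j).choose j)^2 := by
  have hsub : ∑ k ∈ range (i+j+1), ((i+j).choose k)^2 * (k.choose i * k.choose j)
      = ∑ k ∈ Ico i (i+j+1), ((i+j).choose k)^2 * (k.choose i * k.choose j) := by
    rw [range_eq_Ico]
    refine (Finset.sum_subset (fun x hx => ?_) (fun x hx hnx => ?_)).symm
    · simp only [mem_Ico] at hx ⊢; omega
    · simp only [mem_Ico] at hx hnx
      have : x < i := by omega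
      rw [Nat.choose_eq_zero_of_lt this]
      ring
  rw [hsub, Finset.sum_Ico_eq_sum_range]
  have hlen : i + j + 1 - i = j + 1 := by omega
  rw [hlen]
  have hterm : ∀ m ∈ range (j+1),
      ((i+j).choose (i+m))^2 * ((i+m).choose i * (i+m).choose j)
        = ((i+j).choose i * (i+j).choose j) * (j.choose m * i.choose (j-m)) := by
    intro m hm
    have hmj : m ≤ j := by simp only [mem_range] at hm; omega
    have t1 := trinom1 i j m
    have t2 := trinom2 i j m hmj
    calc ((i+j).choose (i+m))^2 * ((i+m).choose i * (i+m).choose j)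
        = ((i+j).choose (i+m) * (i+m).choose i)
            * ((i+j).choose (i+m) * (i+m).choose j) := by ring
      _ = ((i+j).choose i * j.choose m) * ((i+j).choose j * i.choose (j-m)) := by
          rw [t1, t2]
      _ = ((i+j).choose i * (i+j).choose j) * (j.choose m * i.choose (j-m)) := by ring
  rw [Finset.sum_congr rfl hterm, ← Finset.mul_sum]
  have hv : ∑ m ∈ range (j+1), j.choose m * i.choose (j-m) = (i+j).choose j := by
    have := Nat.add_choose_eq j i j
    rw [Finset.Nat.sum_antidiagonal_eq_sum_range_succ_mk] at this
    rw [← this, Nat.add_comm j i]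
  rw [hv]
  ring

lemma strehlN (n : ℕ) :
    ∑ k ∈ range (n+1), (n.choose k)^2 * (2*k).choose n
      = ∑ k ∈ range (n+1), (n.choose k)^3 := by
  have step1 : ∑ k ∈ range (n+1), (n.choose k)^2 * (2*k).choose n
      = ∑ k ∈ range (n+1), ∑ ij ∈ Finset.HasAntidiagonal.antidiagonal n,
          (n.choose k)^2 * (k.choose ij.1 * k.choose ij.2) := by
    refine Finset.sum_congr rfl fun k _ => ?_
    rw [two_mul, Nat.add_choose_eq, Finset.mul_sum]
  rw [step1, Finset.sum_comm]
  have step2 : ∀ ij ∈ Finset.HasAntidiagonal.antidiagonal n,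
      ∑ k ∈ range (n+1), (n.choose k)^2 * (k.choose ij.1 * k.choose ij.2)
        = n.choose ij.1 * (n.choose ij.2)^2 := by
    intro ij hij
    have hij' : ij.1 + ij.2 = n := Finset.HasAntidiagonal.mem_antidiagonal.mp hij
    have := innerSum3 ij.1 ij.2
    rw [hij'] at this
    exact this
  rw [Finset.sum_congr rfl step2, Finset.Nat.sum_antidiagonal_eq_sum_range_succ_mk]
  refine Finset.sum_congr rfl fun k hk => ?_
  have hk' : k ≤ n := by simp only [mem_range] at hk; omega
  rw [Nat.choose_symm hk']
  ring

theorem stmt_12 (u v : ℕ → ℤ)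
    (hu : ∀ n, u n = ∑ k ∈ Finset.range (n + 1), (Nat.choose n k : ℤ) ^ 3)
    (hv : ∀ n, v n = ∑ k ∈ Finset.range (n + 1),
      (Nat.choose n k : ℤ) ^ 2 * (Nat.choose (2 * k) n : ℤ)) :
    (∀ n : ℕ, ((n : ℤ) + 2) ^ 2 * u (n + 2)
        - (7 * (n : ℤ) ^ 2 + 21 * n + 16) * u (n + 1) - 8 * ((n : ℤ) + 1) ^ 2 * u n = 0) ∧
    (∀ n : ℕ, ((n : ℤ) + 2) ^ 2 * v (n + 2)
        - (7 * (n : ℤ) ^ 2 + 21 * n + 16) * v (n + 1) - 8 * ((n : ℤ) + 1) ^ 2 * v n = 0) ∧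
    (∀ n : ℕ, u n = v n) := by
  have hrec : ∀ n : ℕ, ((n : ℤ) + 2) ^ 2 * u (n + 2)
      - (7 * (n : ℤ) ^ 2 + 21 * n + 16) * u (n + 1) - 8 * ((n : ℤ) + 1) ^ 2 * u n = 0 := by
    intro n
    rw [hu, hu, hu]
    have := franelZ n
    convert this using 3 <;> norm_num
  have huv : ∀ n : ℕ, u n = v n := by
    intro n
    rw [hu, hv]
    have h := strehlN n
    have h2 : ((∑ k ∈ range (n+1), (n.choose k)^2 * (2*k).choose n : ℕ) : ℤ)
        = ((∑ k ∈ range (n+1), (n.choose k)^3 : ℕ) : ℤ) := by exact_mod_cast h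
    push_cast at h2
    rw [← h2]
  refine ⟨hrec, fun n => ?_, huv⟩
  rw [← huv n, ← huv (n+1), ← huv (n+2)]
  exact hrec n
end
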